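/- Diagonal neural networks: fix c ∈ ℝⁿ and define f : ℝⁿ × ℝⁿ → ℝ by f(x, y) = ½‖x ∘ y − c‖² = ½ Σ_{i=1}^n (x_i y_i − c_i)², where ∘ is the element-wise product. At every point (x, y), the Hessian of f, as a symmetric operator on ℝ^{2n}, has eigenvalues (counted with multiplicity) exactly the multiset {½[x_i² + y_i² + √((x_i² − y_i²)² + 4(2x_i y_i − c_i)²)] : 1 ≤ i ≤ n} ∪ {½[x_i² + y_i² − √((x_i² − y_i²)² + 4(2x_i y_i − c_i)²)] : 1 ≤ i ≤ n}; in each such pair at least one eigenvalue is nonnegative, and consequently f is non-convex of grade n on ℝ^{2n}. -/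

import Mathlib

open scoped RealInnerProductSpace
open Real Set Polynomial

noncomputable abbrev PI (a : Fin n ⊕ Fin n) :
    EuclideanSpace ℝ (Fin n ⊕ Fin n) →L[ℝ] ℝ := EuclideanSpace.proj a

noncomputable def Fder (c : EuclideanSpace ℝ (Fin n))
    (w : EuclideanSpace ℝ (Fin n ⊕ Fin n)) :
    EuclideanSpace ℝ (Fin n ⊕ Fin n) →L[ℝ] ℝ :=
  ∑ i : Fin n,
    (((w (Sum.inl i) * w (Sum.inr i) - c i) * w (Sum.inr i)) • PI (Sum.inl i) +
     ((w (Sum.inl i) * w (Sum.inr i) - c i) * w (Sum.inl i)) • PI (Sum.inr i))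

lemma hasFDerivAt_f (c : EuclideanSpace ℝ (Fin n))
    (f : EuclideanSpace ℝ (Fin n ⊕ Fin n) → ℝ)
    (hf : ∀ z, f z = (1 / 2) * ∑ i : Fin n,
      (z (Sum.inl i) * z (Sum.inr i) - c i) ^ 2)
    (w : EuclideanSpace ℝ (Fin n ⊕ Fin n)) :
    HasFDerivAt f (Fder c w) w := by
  have hfun : f = fun z => (1 / 2 : ℝ) * ∑ i : Fin n,
      (PI (Sum.inl i) z * PI (Sum.inr i) z - c i) *
      (PI (Sum.inl i) z * PI (Sum.inr i) z - c i) := by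
    funext z; rw [hf]; congr 1; exact Finset.sum_congr rfl fun i _ => (sq _)
  rw [hfun]
  have h1 : ∀ i : Fin n, HasFDerivAt
      (fun z : EuclideanSpace ℝ (Fin n ⊕ Fin n) =>
        (PI (Sum.inl i) z * PI (Sum.inr i) z - c i) *
        (PI (Sum.inl i) z * PI (Sum.inr i) z - c i))
      ((PI (Sum.inl i) w * PI (Sum.inr i) w - c i) •
        (w (Sum.inl i) • PI (Sum.inr i) + w (Sum.inr i) • PI (Sum.inl i)) +
       (PI (Sum.inl i) w * PI (Sum.inr i) w - c i) •
        (w (Sum.inl i) • PI (Sum.inr i) + w (Sum.inr i) • PI (Sum.inl i))) w := by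
    intro i
    have hg : HasFDerivAt
        (fun z : EuclideanSpace ℝ (Fin n ⊕ Fin n) =>
          PI (Sum.inl i) z * PI (Sum.inr i) z - c i)
        (w (Sum.inl i) • PI (Sum.inr i) + w (Sum.inr i) • PI (Sum.inl i)) w :=
      ((PI (Sum.inl i)).hasFDerivAt.mul (PI (Sum.inr i)).hasFDerivAt).sub_const (c i)
    exact hg.mul hg
  have h2 := (HasFDerivAt.fun_sum (u := (Finset.univ : Finset (Fin n))) (fun i _ => h1 i)).const_mul (1/2 : ℝ)
  refine h2.congr_fderiv ?_
  ext u
  simp [Fder, Finset.mul_sum]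
  exact Finset.sum_congr rfl fun i _ => by ring

lemma hess_apply (c : EuclideanSpace ℝ (Fin n))
    (f : EuclideanSpace ℝ (Fin n ⊕ Fin n) → ℝ)
    (hf : ∀ z, f z = (1 / 2) * ∑ i : Fin n,
      (z (Sum.inl i) * z (Sum.inr i) - c i) ^ 2)
    (z u v : EuclideanSpace ℝ (Fin n ⊕ Fin n)) :
    iteratedFDeriv ℝ 2 f z ![u, v] = ∑ i : Fin n,
      (((u (Sum.inl i) * z (Sum.inr i) + z (Sum.inl i) * u (Sum.inr i)) * z (Sum.inr i) +
        (z (Sum.inl i) * z (Sum.inr i) - c i) * u (Sum.inr i)) * v (Sum.inl i) +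
       ((u (Sum.inl i) * z (Sum.inr i) + z (Sum.inl i) * u (Sum.inr i)) * z (Sum.inl i) +
        (z (Sum.inl i) * z (Sum.inr i) - c i) * u (Sum.inl i)) * v (Sum.inr i)) := by
  rw [iteratedFDeriv_two_apply]
  have hfd : fderiv ℝ f = Fder c := funext fun w => (hasFDerivAt_f c f hf w).fderiv
  rw [hfd]
  have hg : ∀ i : Fin n, HasFDerivAt
      (fun w : EuclideanSpace ℝ (Fin n ⊕ Fin n) =>
        PI (Sum.inl i) w * PI (Sum.inr i) w - c i)
      (z (Sum.inl i) • PI (Sum.inr i) + z (Sum.inr i) • PI (Sum.inl i)) z := fun i =>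
    ((PI (Sum.inl i)).hasFDerivAt.mul (PI (Sum.inr i)).hasFDerivAt).sub_const (c i)
  have h1 : ∀ i : Fin n, HasFDerivAt
      (fun w : EuclideanSpace ℝ (Fin n ⊕ Fin n) =>
        ((w (Sum.inl i) * w (Sum.inr i) - c i) * w (Sum.inr i)) • PI (Sum.inl i) +
        ((w (Sum.inl i) * w (Sum.inr i) - c i) * w (Sum.inl i)) • PI (Sum.inr i))
      ((((PI (Sum.inl i) z * PI (Sum.inr i) z - c i) • PI (Sum.inr i) +
          PI (Sum.inr i) z • (z (Sum.inl i) • PI (Sum.inr i) + z (Sum.inr i) • PI (Sum.inl i))).smulRight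
            (PI (Sum.inl i))) +
       (((PI (Sum.inl i) z * PI (Sum.inr i) z - c i) • PI (Sum.inl i) +
          PI (Sum.inl i) z • (z (Sum.inl i) • PI (Sum.inr i) + z (Sum.inr i) • PI (Sum.inl i))).smulRight
            (PI (Sum.inr i)))) z := by
    intro i
    exact (((hg i).mul (PI (Sum.inr i)).hasFDerivAt).smul_const (PI (Sum.inl i))).add
      (((hg i).mul (PI (Sum.inl i)).hasFDerivAt).smul_const (PI (Sum.inr i)))
  have hD : HasFDerivAt (Fder c) (∑ i : Fin n,
      ((((PI (Sum.inl i) z * PI (Sum.inr i) z - c i) • PI (Sum.inr i) +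
          PI (Sum.inr i) z • (z (Sum.inl i) • PI (Sum.inr i) + z (Sum.inr i) • PI (Sum.inl i))).smulRight
            (PI (Sum.inl i))) +
       (((PI (Sum.inl i) z * PI (Sum.inr i) z - c i) • PI (Sum.inl i) +
          PI (Sum.inl i) z • (z (Sum.inl i) • PI (Sum.inr i) + z (Sum.inr i) • PI (Sum.inl i))).smulRight
            (PI (Sum.inr i))))) z := by
    unfold Fder
    exact HasFDerivAt.fun_sum (fun i _ => h1 i)
  rw [hD.fderiv]
  simp [ContinuousLinearMap.sum_apply]
  exact Finset.sum_congr rfl fun i _ => by ring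


section Aux

lemma my_charpoly_blockDiagonal {R : Type*} [CommRing R] {m o : Type*}
    [DecidableEq m] [Fintype m] [DecidableEq o] [Fintype o] (M : o → Matrix m m R) :
    (Matrix.blockDiagonal M).charpoly = ∏ i, (M i).charpoly := by
  unfold Matrix.charpoly
  rw [show Matrix.charmatrix (Matrix.blockDiagonal M) =
      Matrix.blockDiagonal (fun i => Matrix.charmatrix (M i)) from ?_,
    Matrix.det_blockDiagonal]
  ext ⟨a, i⟩ ⟨b, j⟩
  by_cases hij : i = j
  · subst hij
    by_cases hab : a = b
    · subst hab
      simp [Matrix.charmatrix_apply_eq, Matrix.blockDiagonal_apply]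
    · rw [Matrix.charmatrix_apply_ne _ _ _ (by simp [Prod.ext_iff, hab])]
      simp [Matrix.blockDiagonal_apply, Matrix.charmatrix_apply_ne _ _ _ hab]
  · rw [Matrix.charmatrix_apply_ne _ _ _ (by simp [Prod.ext_iff, hij])]
    simp [Matrix.blockDiagonal_apply, hij]

lemma my_charpoly_two (a b d p q : ℝ) (h1 : p + q = a + d) (h2 : p * q = a * d - b * b) :
    (!![a, b; b, d] : Matrix (Fin 2) (Fin 2) ℝ).charpoly =
      (X - C p) * (X - C q) := by
  unfold Matrix.charpoly
  rw [Matrix.det_fin_two]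
  rw [Matrix.charmatrix_apply_eq, Matrix.charmatrix_apply_eq,
    Matrix.charmatrix_apply_ne _ _ _ (by decide), Matrix.charmatrix_apply_ne _ _ _ (by decide)]
  trans (X ^ 2 - C (a + d) * X + C (a * d - b * b))
  · have e00 : (!![a, b; b, d] : Matrix (Fin 2) (Fin 2) ℝ) 0 0 = a := rfl
    have e01 : (!![a, b; b, d] : Matrix (Fin 2) (Fin 2) ℝ) 0 1 = b := rfl
    have e10 : (!![a, b; b, d] : Matrix (Fin 2) (Fin 2) ℝ) 1 0 = b := rfl
    have e11 : (!![a, b; b, d] : Matrix (Fin 2) (Fin 2) ℝ) 1 1 = d := rfl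
    rw [e00, e01, e10, e11]
    simp only [map_add, map_sub, map_mul]
    ring
  · rw [← h1, ← h2]
    simp only [map_add, map_mul]
    ring

end Aux

def sumEquiv (n : ℕ) : Fin 2 × Fin n ≃ Fin n ⊕ Fin n where
  toFun p := if p.1 = 0 then Sum.inl p.2 else Sum.inr p.2
  invFun s := Sum.elim (fun i => ((0 : Fin 2), i)) (fun i => ((1 : Fin 2), i)) s
  left_inv := by rintro ⟨a, i⟩; fin_cases a <;> simp
  right_inv := by rintro (i | i) <;> simp

example (n : ℕ) : (sumEquiv n).symm ∘ Sum.inl = fun i => ((0 : Fin 2), i) := rfl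

lemma matrix_eq {n : ℕ} (c : EuclideanSpace ℝ (Fin n))
    (f : EuclideanSpace ℝ (Fin n ⊕ Fin n) → ℝ)
    (hf : ∀ z, f z = (1 / 2) * ∑ i : Fin n,
      (z (Sum.inl i) * z (Sum.inr i) - c i) ^ 2)
    (z : EuclideanSpace ℝ (Fin n ⊕ Fin n)) :
    (Matrix.of (fun a b : Fin n ⊕ Fin n =>
        iteratedFDeriv ℝ 2 f z ![EuclideanSpace.single a (1 : ℝ),
          EuclideanSpace.single b (1 : ℝ)])) =
    Matrix.reindex (sumEquiv n) (sumEquiv n) (Matrix.blockDiagonal (fun i : Fin n =>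
      !![z (Sum.inr i) ^ 2, 2 * z (Sum.inl i) * z (Sum.inr i) - c i;
         2 * z (Sum.inl i) * z (Sum.inr i) - c i, z (Sum.inl i) ^ 2])) := by
  ext a b
  rw [Matrix.of_apply, hess_apply c f hf, Matrix.reindex_apply, Matrix.submatrix_apply]
  rcases a with i | i <;> rcases b with j | j <;> by_cases h : i = j <;>
    first
      | (subst h
         simp [_root_.sumEquiv, Matrix.blockDiagonal_apply, EuclideanSpace.single_apply,
           Finset.sum_ite_eq']
         try ring)
      | simp [_root_.sumEquiv, Matrix.blockDiagonal_apply, EuclideanSpace.single_apply,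
          Finset.sum_ite_eq', h, Ne.symm h]

noncomputable def Lmap (n : ℕ) :
    EuclideanSpace ℝ (Fin n) →ₗ[ℝ] EuclideanSpace ℝ (Fin n ⊕ Fin n) where
  toFun x := WithLp.toLp 2 (fun a => Sum.elim x.ofLp 0 a)
  map_add' x y := by ext a; rcases a with i | i <;> simp
  map_smul' r x := by ext a; rcases a with i | i <;> simp


/-- Diagonal neural networks: for `f(x, y) = ½‖x ∘ y − c‖²` on `ℝⁿ × ℝⁿ ≅ ℝ^{2n}`,
at every point the Hessian (represented in the standard basis) has characteristic polynomial
`∏ᵢ (X − λᵢ⁺)(X − λᵢ⁻)` with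
`λᵢ^± = ½[xᵢ² + yᵢ² ± √((xᵢ² − yᵢ²)² + 4(2xᵢyᵢ − cᵢ)²)]`, i.e. its eigenvalues with
multiplicity are exactly this multiset; in each pair the `+` eigenvalue is nonnegative,
and consequently `f` is non-convex of grade `n`. -/
theorem diagonal_nn_hessian_spectrum {n : ℕ} (c : EuclideanSpace ℝ (Fin n))
    (f : EuclideanSpace ℝ (Fin n ⊕ Fin n) → ℝ)
    (hf : ∀ z, f z = (1 / 2) * ∑ i : Fin n,
      (z (Sum.inl i) * z (Sum.inr i) - c i) ^ 2)
    (z : EuclideanSpace ℝ (Fin n ⊕ Fin n))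
    (lamP lamM : Fin n → ℝ)
    (hlamP : ∀ i, lamP i = (1 / 2) * (z (Sum.inl i) ^ 2 + z (Sum.inr i) ^ 2 +
      Real.sqrt ((z (Sum.inl i) ^ 2 - z (Sum.inr i) ^ 2) ^ 2 +
        4 * (2 * z (Sum.inl i) * z (Sum.inr i) - c i) ^ 2)))
    (hlamM : ∀ i, lamM i = (1 / 2) * (z (Sum.inl i) ^ 2 + z (Sum.inr i) ^ 2 -
      Real.sqrt ((z (Sum.inl i) ^ 2 - z (Sum.inr i) ^ 2) ^ 2 +
        4 * (2 * z (Sum.inl i) * z (Sum.inr i) - c i) ^ 2))) :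
    (Matrix.of (fun a b : Fin n ⊕ Fin n =>
        iteratedFDeriv ℝ 2 f z ![EuclideanSpace.single a (1 : ℝ),
          EuclideanSpace.single b (1 : ℝ)])).charpoly =
      ∏ i : Fin n, ((X - C (lamP i)) * (X - C (lamM i))) ∧
    (∀ i, 0 ≤ lamP i) ∧
    ∃ V : Submodule ℝ (EuclideanSpace ℝ (Fin n ⊕ Fin n)),
      n ≤ Module.finrank ℝ V ∧ ∀ h ∈ V, 0 ≤ iteratedFDeriv ℝ 2 f z ![h, h] := by
  refine ⟨?_, ?_, ?_⟩
  · rw [matrix_eq c f hf z, Matrix.charpoly_reindex, my_charpoly_blockDiagonal]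
    refine Finset.prod_congr rfl fun i _ => ?_
    have hD : (0 : ℝ) ≤ (z (Sum.inl i) ^ 2 - z (Sum.inr i) ^ 2) ^ 2 +
        4 * (2 * z (Sum.inl i) * z (Sum.inr i) - c i) ^ 2 := by positivity
    have hs := Real.sq_sqrt hD
    apply my_charpoly_two
    · rw [hlamP, hlamM]; ring
    · rw [hlamP, hlamM]
      linear_combination (-(1 / 4 : ℝ)) * hs
  · intro i
    rw [hlamP]
    positivity
  · refine ⟨LinearMap.range (Lmap n), ?_, ?_⟩
    · have hinj : Function.Injective (Lmap n) := by
        intro x y h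
        ext i
        exact congrArg (fun v => v (Sum.inl i)) h
      rw [LinearMap.finrank_range_of_inj hinj, finrank_euclideanSpace_fin]
    · rintro h ⟨x, rfl⟩
      rw [hess_apply c f hf]
      refine Finset.sum_nonneg fun i _ => ?_
      have h1 : Lmap n x (Sum.inl i) = x i := rfl
      have h2 : Lmap n x (Sum.inr i) = 0 := rfl
      rw [h1, h2]
      nlinarith [sq_nonneg (x i * z (Sum.inr i))]
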